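/- Let C have geometric realizations (Δᵒᵖ-colimits) and binary products with realizations preserving binary products, and let C₀ ⊆ C be a full subcategory. Define C' ⊆ C as the smallest full subcategory containing C₀ closed under Δᵒᵖ-colimits and retracts. Then for any product-preserving-on-C₀ left adjoint L : C → D into a category D with the same properties, L preserves binary products of objects of C'. -/

import Mathlib

open CategoryTheory CategoryTheory.Limits

namespace Stmt17Aux

attribute [local simp] prod.lift_fst prod.lift_snd prod.lift_fst_assoc prod.lift_snd_assoc

instance : IsConnected SimplexCategory := by
  have : Nonempty SimplexCategory := ⟨SimplexCategory.mk 0⟩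
  apply zigzag_isConnected
  intro j₁ j₂
  exact .trans (.single (.inl ⟨SimplexCategory.const j₁ (SimplexCategory.mk 0) 0⟩))
    (.single (.inr ⟨SimplexCategory.const j₂ (SimplexCategory.mk 0) 0⟩))

variable {C : Type*} [Category C] {D : Type*} [Category D] {J : Type*} [Category J]

/-- The constant cocone over a connected category. -/
def constCocone (J : Type*) [Category J] (X : C) : Cocone ((Functor.const J).obj X) where
  pt := X
  ι := { app := fun _ => 𝟙 X }

noncomputable def isColimitConstCocone (J : Type*) [Category J] [IsConnected J] (X : C) :
    IsColimit (constCocone J X) where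
  desc s := s.ι.app (Classical.arbitrary J)
  fac s j := by
    have : ∀ j j' : J, s.ι.app j = s.ι.app j' := nat_trans_from_is_connected s.ι
    simpa [constCocone] using this (Classical.arbitrary J) j
  uniq s m hm := by have := hm (Classical.arbitrary J); exact (Category.id_comp m).symm.trans this

section Fan

variable (X : C) [HasBinaryProducts C] (F : J ⥤ C)

/-- First projection out of the pointwise product diagram. -/
@[simps]
noncomputable def pi1 : F ⋙ prod.functor.obj X ⟶ (Functor.const J).obj X where
  app _ := prod.fst
  naturality j j' f := by simp [prod.functor]

/-- Second projection out of the pointwise product diagram. -/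
@[simps]
noncomputable def pi2 : F ⋙ prod.functor.obj X ⟶ F where
  app _ := prod.snd
  naturality j j' f := by simp [prod.functor]

/-- The pointwise product diagram is a binary product in the functor category. -/
noncomputable def isLimitProdFan :
    IsLimit (BinaryFan.mk (pi1 X F) (pi2 X F)) := by
  fapply BinaryFan.isLimitMk
  · refine fun s =>
      { app := fun j => prod.lift (s.fst.app j) (s.snd.app j)
        naturality := fun j j' f => ?_ }
    have hnat1 := s.fst.naturality f
    have hnat2 := s.snd.naturality f
    simp only [pair_obj_left, pair_obj_right, Functor.const_obj_map, Functor.const_obj_obj,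
      Category.comp_id] at hnat1 hnat2
    apply Limits.prod.hom_ext
    · simp only [Category.assoc, Functor.comp_map, prod.functor, prod.lift_fst, prod.map_fst,
        prod.lift_fst_assoc, Category.comp_id]
      exact (congrArg (s.pt.map f ≫ ·) (prod.lift_fst _ _)).trans (hnat1.trans (prod.lift_fst _ _).symm)
    · simp only [Category.assoc, Functor.comp_map, prod.functor, prod.lift_snd, prod.map_snd,
        prod.lift_snd_assoc]
      exact (congrArg (s.pt.map f ≫ ·) (prod.lift_snd _ _)).trans (hnat2.trans (prod.lift_snd_assoc _ _ _).symm)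
  · intro s
    ext j
    simp
    exact prod.lift_fst _ _
  · intro s
    ext j
    simp
    exact prod.lift_snd _ _
  · intro s m h₁ h₂
    ext j
    apply Limits.prod.hom_ext
    · have := NatTrans.congr_app h₁ j; simp at this; exact this.trans (prod.lift_fst _ _).symm
    · have := NatTrans.congr_app h₂ j; simp at this; exact this.trans (prod.lift_snd _ _).symm

/-- `colim` applied to the pointwise-product fan is a product fan. -/
noncomputable def isLimitColimFan [HasColimitsOfShape J C]
    (hC : PreservesLimitsOfShape (Discrete WalkingPair) (colim : (J ⥤ C) ⥤ C)) :
    IsLimit (BinaryFan.mk (colim.map (pi1 X F)) (colim.map (pi2 X F))) := by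
  haveI := hC
  exact mapIsLimitOfPreservesOfIsLimit colim _ _ (isLimitProdFan X F)

end Fan

/-- If `colim : (J ⥤ C) ⥤ C` preserves binary products and `J` is connected, then
`X ⨯ -` preserves colimits of shape `J`. -/
noncomputable def preservesColimitsOfShapeProdFunctor [IsConnected J]
    [HasColimitsOfShape J C] [HasBinaryProducts C]
    (hC : PreservesLimitsOfShape (Discrete WalkingPair) (colim : (J ⥤ C) ⥤ C)) (X : C) :
    PreservesColimitsOfShape J (prod.functor.obj X) := by
  constructor
  intro F
  apply preservesColimit_of_preserves_colimit_cocone (colimit.isColimit F)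
  let hg : colimit ((Functor.const J).obj X) ≅ X :=
    (colimit.isColimit _).coconePointUniqueUpToIso (isColimitConstCocone J X)
  have hfan3 := BinaryFan.isLimitCompLeftIso
    (BinaryFan.mk (colim.map (pi1 X F)) (colim.map (pi2 X F))) hg.hom (isLimitColimFan X F hC)
  have heq : (colimit.isColimit (F ⋙ prod.functor.obj X)).desc
        ((prod.functor.obj X).mapCocone (colimit.cocone F)) =
      (hfan3.conePointUniqueUpToIso (prodIsProd X (colimit F))).hom := by
    apply colimit.hom_ext
    intro j
    have h₁' : (hfan3.conePointUniqueUpToIso (prodIsProd X (colimit F))).hom ≫ prod.fst =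
        colim.map (pi1 X F) ≫ hg.hom := by
      simpa using
        hfan3.conePointUniqueUpToIso_hom_comp (prodIsProd X (colimit F)) ⟨WalkingPair.left⟩
    have h₂' : (hfan3.conePointUniqueUpToIso (prodIsProd X (colimit F))).hom ≫ prod.snd =
        colim.map (pi2 X F) := by
      simpa using
        hfan3.conePointUniqueUpToIso_hom_comp (prodIsProd X (colimit F)) ⟨WalkingPair.right⟩
    have hgj : colimit.ι ((Functor.const J).obj X) j ≫ hg.hom = 𝟙 X :=
      (colimit.isColimit _).comp_coconePointUniqueUpToIso_hom (isColimitConstCocone J X) j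
    apply Limits.prod.hom_ext
    · refine (Category.assoc _ _ _).trans (Eq.trans ?_ (Category.assoc _ _ _).symm)
      erw [h₁']
      simp only [colimit.ι_map_assoc, pi1_app, hgj]
      simp [prod.functor]
      erw [colimit.isColimit_desc, colimit.ι_desc_assoc]
      simp
    · refine (Category.assoc _ _ _).trans (Eq.trans ?_ (Category.assoc _ _ _).symm)
      erw [h₂']
      simp only [colimit.ι_map, pi2_app]
      simp [prod.functor]
      erw [colimit.isColimit_desc, colimit.ι_desc_assoc]
      simp
  have : IsIso ((colimit.isColimit (F ⋙ prod.functor.obj X)).desc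
      ((prod.functor.obj X).mapCocone (colimit.cocone F))) := by
    rw [heq]; exact Iso.isIso_hom _
  exact IsColimit.ofPointIso (colimit.isColimit (F ⋙ prod.functor.obj X))

/-- A natural transformation which is an isomorphism on the objects of a diagram is an
isomorphism on the colimit point, provided both functors preserve the colimit. -/
theorem isIso_app_of_isColimit {H₁ H₂ : C ⥤ D} (θ : H₁ ⟶ H₂) {F : J ⥤ C} {c : Cocone F}
    (h₁ : IsColimit (H₁.mapCocone c)) (h₂ : IsColimit (H₂.mapCocone c))
    (h : ∀ j, IsIso (θ.app (F.obj j))) : IsIso (θ.app c.pt) := by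
  haveI : ∀ j : J, IsIso ((Functor.whiskerLeft F θ).app j) := h
  haveI : IsIso (Functor.whiskerLeft F θ) := NatIso.isIso_of_isIso_app _
  let α : F ⋙ H₁ ≅ F ⋙ H₂ := asIso (Functor.whiskerLeft F θ)
  have h₂' : IsColimit ((Cocone.precompose α.hom).obj (H₂.mapCocone c)) :=
    (IsColimit.precomposeHomEquiv α _).symm h₂
  have heq : θ.app c.pt = (h₁.coconePointUniqueUpToIso h₂').hom := by
    refine h₁.hom_ext fun j => ?_
    rw [h₁.comp_coconePointUniqueUpToIso_hom]
    simpa [α] using θ.naturality (c.ι.app j)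
  rw [heq]
  infer_instance

/-- Realization case: `prodComparison` at a colimit point. -/
theorem isIso_prodComparison_of_isColimit [IsConnected J]
    [HasColimitsOfShape J C] [HasColimitsOfShape J D]
    [HasBinaryProducts C] [HasBinaryProducts D]
    (hC : PreservesLimitsOfShape (Discrete WalkingPair) (colim : (J ⥤ C) ⥤ C))
    (hD : PreservesLimitsOfShape (Discrete WalkingPair) (colim : (J ⥤ D) ⥤ D))
    (L : C ⥤ D) [L.IsLeftAdjoint] (X : C) {F : J ⥤ C} {c : Cocone F} (hc : IsColimit c)
    (h : ∀ j, IsIso (prodComparison L X (F.obj j))) :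
    IsIso (prodComparison L X c.pt) := by
  haveI := preservesColimitsOfShapeProdFunctor (C := C) (J := J) hC X
  haveI := preservesColimitsOfShapeProdFunctor (C := D) (J := J) hD (L.obj X)
  have h₁ : IsColimit ((prod.functor.obj X ⋙ L).mapCocone c) :=
    isColimitOfPreserves (prod.functor.obj X ⋙ L) hc
  have h₂ : IsColimit ((L ⋙ prod.functor.obj (L.obj X)).mapCocone c) :=
    isColimitOfPreserves (L ⋙ prod.functor.obj (L.obj X)) hc
  exact isIso_app_of_isColimit (prodComparisonNatTrans L X) h₁ h₂ h

/-- Retract case: `prodComparison` at a retract in the second variable. -/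
theorem isIso_prodComparison_of_retract [HasBinaryProducts C] [HasBinaryProducts D]
    (L : C ⥤ D) (A : C) {Y Y' : C} (i : Y ⟶ Y') (r : Y' ⟶ Y) (hir : i ≫ r = 𝟙 Y)
    (h : IsIso (prodComparison L A Y')) : IsIso (prodComparison L A Y) := by
  have n₁ := prodComparison_natural L (𝟙 A) i
  have n₂ := prodComparison_natural L (𝟙 A) r
  simp only [L.map_id] at n₁ n₂
  refine ⟨prod.map (𝟙 _) (L.map i) ≫ inv (prodComparison L A Y') ≫ L.map (prod.map (𝟙 A) r),
    ?_, ?_⟩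
  · rw [← Category.assoc, ← n₁]
    simp only [Category.assoc, IsIso.hom_inv_id_assoc]
    rw [← L.map_comp]
    simp [prod.map_map, hir]
  · simp only [Category.assoc, n₂, IsIso.inv_hom_id_assoc, prod.map_map, Category.id_comp,
      ← L.map_comp, hir]
    simp

/-- Symmetry of `prodComparison` in the two variables. -/
theorem isIso_prodComparison_swap [HasBinaryProducts C] [HasBinaryProducts D] (L : C ⥤ D)
    (A B : C) (h : IsIso (prodComparison L A B)) : IsIso (prodComparison L B A) := by
  have : prodComparison L B A = L.map (prod.lift prod.snd prod.fst) ≫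
      prodComparison L A B ≫ prod.lift prod.snd prod.fst := by
    apply Limits.prod.hom_ext
    · simp [← L.map_comp]
    · simp [← L.map_comp]
  rw [this]
  haveI := h
  haveI : IsIso (prod.lift (prod.snd : B ⨯ A ⟶ A) prod.fst) :=
    ⟨prod.lift prod.snd prod.fst, by simp, by simp⟩
  haveI : IsIso (prod.lift (prod.snd : L.obj A ⨯ L.obj B ⟶ L.obj B) prod.fst) :=
    ⟨prod.lift prod.snd prod.fst, by simp, by simp⟩
  infer_instance

end Stmt17Aux

variable {C : Type*} [Category C]

/-- The smallest full subcategory (as a predicate on objects) of `C` containing a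
full subcategory `C₀` (given by the predicate `P`) and closed under `Δᵒᵖ`-colimits
(geometric realizations) and retracts. -/
inductive RealizationRetractClosure (P : C → Prop) : C → Prop
  | base {X : C} (hX : P X) : RealizationRetractClosure P X
  | realization (F : SimplexCategoryᵒᵖ ⥤ C)
      (hF : ∀ n, RealizationRetractClosure P (F.obj n))
      (c : Cocone F) (hc : Nonempty (IsColimit c)) : RealizationRetractClosure P c.pt
  | retract {X Y : C} (hY : RealizationRetractClosure P Y)
      (i : X ⟶ Y) (r : Y ⟶ X) (hir : i ≫ r = 𝟙 X) : RealizationRetractClosure P X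

/-- Let `C` have geometric realizations (`Δᵒᵖ`-colimits) and binary
products, with realizations preserving binary products, let `C₀ ⊆ C` be a full
subcategory (predicate `P`), and let `C' ⊆ C` be the smallest full subcategory
containing `C₀` and closed under `Δᵒᵖ`-colimits and retracts.  Then any left adjoint
`L : C ⥤ D` into a category `D` with the same properties which preserves binary
products of objects of `C₀` also preserves binary products of objects of `C'`. -/
theorem stmt_17 {D : Type*} [Category D]
    [HasBinaryProducts C] [HasBinaryProducts D]
    [HasColimitsOfShape SimplexCategoryᵒᵖ C] [HasColimitsOfShape SimplexCategoryᵒᵖ D]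
    (hC : PreservesLimitsOfShape (Discrete WalkingPair)
      (colim : (SimplexCategoryᵒᵖ ⥤ C) ⥤ C))
    (hD : PreservesLimitsOfShape (Discrete WalkingPair)
      (colim : (SimplexCategoryᵒᵖ ⥤ D) ⥤ D))
    (L : C ⥤ D) [L.IsLeftAdjoint]
    (P : C → Prop)
    (h₀ : ∀ X Y : C, P X → P Y → IsIso (prodComparison L X Y))
    (X Y : C) (hX : RealizationRetractClosure P X) (hY : RealizationRetractClosure P Y) :
    IsIso (prodComparison L X Y) := by
  induction hX with
  | base hPX =>
    rename_i X
    induction hY with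
    | base hPY => exact h₀ _ _ hPX hPY
    | realization F hF c hc ih =>
      exact Stmt17Aux.isIso_prodComparison_of_isColimit hC hD L X hc.some ih
    | retract hY' i r hir ih =>
      exact Stmt17Aux.isIso_prodComparison_of_retract L X i r hir ih
  | realization F hF c hc ih =>
    refine Stmt17Aux.isIso_prodComparison_swap L Y c.pt ?_
    exact Stmt17Aux.isIso_prodComparison_of_isColimit hC hD L Y hc.some
      (fun n => Stmt17Aux.isIso_prodComparison_swap L (F.obj n) Y (ih n))
  | retract hY' i r hir ih =>
    refine Stmt17Aux.isIso_prodComparison_swap L Y _ ?_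
    exact Stmt17Aux.isIso_prodComparison_of_retract L Y i r hir
      (Stmt17Aux.isIso_prodComparison_swap L _ Y ih)
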